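/- Let 𝒯 be a finite tree rooted at r and let M ⊆ V(𝒯) with |M| ≥ 2 be such that every leaf of 𝒯 belongs to M. Let v be a vertex of maximum distance from r among all vertices whose descendant subtree (i.e., the set consisting of the vertex and all of its descendants with respect to r) contains at least two vertices of M. Then in the subtree of 𝒯 rooted at v, every vertex other than v has at most one child; equivalently, the subtree of 𝒯 rooted at v is a spider with center v. -/

import Mathlib

open SimpleGraph Walk

section Aux

variable {V : Type*} {G : SimpleGraph V} {r : V}

/-- In a tree, every path realizes the distance. -/
private lemma tree_path_length (hG : G.IsTree) {a b : V} (p : G.Walk a b) (hp : p.IsPath) :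
    p.length = G.dist a b := by
  classical
  obtain ⟨q, hq, hql⟩ := hG.isConnected.exists_path_of_dist a b
  rw [← hql, (hG.existsUnique_path a b).unique hp hq]

/-- Distance decomposition across a vertex lying on every path. -/
private lemma tree_dist_add (hG : G.IsTree) {x u : V}
    (hx : ∀ p : G.Walk r u, p.IsPath → x ∈ p.support) :
    G.dist r u = G.dist r x + G.dist x u := by
  classical
  obtain ⟨p, hp, -⟩ := hG.existsUnique_path r u
  have hxs := hx p hp
  have h1 : (p.takeUntil x hxs).length = G.dist r x :=
    tree_path_length hG _ (hp.takeUntil hxs)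
  have h2 : (p.dropUntil x hxs).length = G.dist x u :=
    tree_path_length hG _ (hp.dropUntil hxs)
  have h3 := congrArg Walk.length (p.take_spec hxs)
  rw [Walk.length_append] at h3
  have h4 := tree_path_length hG p hp
  omega

/-- On a path from the root, the vertex at index `dist r w` is `w`. -/
private lemma tree_getVert (hG : G.IsTree) {m : V} (p : G.Walk r m) (hp : p.IsPath)
    {w : V} (hw : w ∈ p.support) : p.getVert (G.dist r w) = w := by
  classical
  have hl : (p.takeUntil w hw).length = G.dist r w :=
    tree_path_length hG _ (hp.takeUntil hw)
  conv_lhs => rw [← p.take_spec hw]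
  rw [Walk.getVert_append, ← hl]
  simp [Walk.getVert_zero]

/-- Two vertices at the same depth lying on the (unique) path to a common vertex coincide. -/
private lemma tree_same_level (hG : G.IsTree) {a b m : V}
    (ha : ∀ p : G.Walk r m, p.IsPath → a ∈ p.support)
    (hb : ∀ p : G.Walk r m, p.IsPath → b ∈ p.support)
    (hd : G.dist r a = G.dist r b) : a = b := by
  obtain ⟨p, hp, -⟩ := hG.existsUnique_path r m
  have h1 := tree_getVert hG p hp (ha p hp)
  have h2 := tree_getVert hG p hp (hb p hp)
  rw [← h1, ← h2, hd]

/-- A child is one step deeper than its parent. -/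
private lemma tree_child_dist (hG : G.IsTree) {u x : V} (hadj : G.Adj u x)
    (hx : ∀ p : G.Walk r x, p.IsPath → u ∈ p.support) :
    G.dist r x = G.dist r u + 1 := by
  rw [tree_dist_add hG hx, dist_eq_one_iff_adj.mpr hadj]

/-- Descendance is transitive. -/
private lemma tree_des_trans {x w u : V}
    (hu : ∀ p : G.Walk r u, p.IsPath → x ∈ p.support)
    (hx : ∀ p : G.Walk r x, p.IsPath → w ∈ p.support) :
    ∀ p : G.Walk r u, p.IsPath → w ∈ p.support := by
  classical
  intro p hp
  have hxs := hu p hp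
  exact p.support_takeUntil_subset hxs (hx (p.takeUntil x hxs) (hp.takeUntil hxs))

/-- For adjacent `w z`, either `z` is a descendant of `w` or `w` is a descendant of `z`. -/
private lemma tree_neighbor_dichotomy (hG : G.IsTree) {w z : V} (h : G.Adj w z) :
    (∀ p : G.Walk r z, p.IsPath → w ∈ p.support) ∨
      (∀ p : G.Walk r w, p.IsPath → z ∈ p.support) := by
  obtain ⟨p, hp, -⟩ := hG.existsUnique_path r z
  by_cases hw : w ∈ p.support
  · left
    intro q hq
    rw [(hG.existsUnique_path r z).unique hq hp]
    exact hw
  · right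
    intro q hq
    have hcp : (p.concat h.symm).IsPath := by
      rw [isPath_def, support_concat, List.nodup_append]
      exact ⟨hp.support_nodup, List.nodup_singleton w, by
        intro a ha b hb; rw [List.mem_singleton] at hb; subst hb; exact fun e => hw (e ▸ ha)⟩
    rw [(hG.existsUnique_path r w).unique hq hcp, support_concat]
    exact List.mem_append_left _ p.end_mem_support

/-- Every descendant subtree contains a vertex of `M`. -/
private lemma subtree_meets_M [Fintype V] (hG : G.IsTree) (M : Set V) (hM : 2 ≤ M.ncard)
    (hleaf : ∀ u : V, (G.neighborSet u).ncard = 1 → u ∈ M) (x : V) :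
    ∃ m ∈ M, ∀ p : G.Walk r m, p.IsPath → x ∈ p.support := by
  classical
  set S : Set V := {u : V | ∀ p : G.Walk r u, p.IsPath → x ∈ p.support} with hS
  have hxS : x ∈ S := fun p _ => p.end_mem_support
  obtain ⟨w, hwS, hwmax⟩ :=
    Set.exists_max_image S (fun y => G.dist r y) S.toFinite ⟨x, hxS⟩
  -- every neighbor of `w` is an ancestor of `w`
  have hup : ∀ n : V, G.Adj w n → ∀ p : G.Walk r w, p.IsPath → n ∈ p.support := by
    intro n hadj
    rcases tree_neighbor_dichotomy (r := r) hG hadj with hc | hc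
    swap
    · exact hc
    · -- `n` is a descendant of `w`, strictly deeper, contradiction with maximality
      exfalso
      have hnS : n ∈ S := tree_des_trans hc hwS
      have := hwmax n hnS
      have hd := tree_child_dist (r := r) hG hadj hc
      omega
  -- hence `w` has at most one neighbor
  have hsub : (G.neighborSet w).Subsingleton := by
    intro a ha b hb
    have hda := tree_child_dist (r := r) hG ha.symm (hup a ha)
    have hdb := tree_child_dist (r := r) hG hb.symm (hup b hb)
    exact tree_same_level hG (hup a ha) (hup b hb) (by omega)
  -- and at least one, since `V` has at least two vertices and `G` is connected
  obtain ⟨m₁, m₂, hm₁, hm₂, hmne⟩ := (Set.one_lt_ncard_iff M.toFinite).mp hM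
  have hne : ∃ z : V, z ≠ w := by
    by_cases h1 : m₁ = w
    · exact ⟨m₂, by rw [← h1]; exact hmne.symm⟩
    · exact ⟨m₁, h1⟩
  obtain ⟨z, hz⟩ := hne
  obtain ⟨p⟩ := hG.isConnected.preconnected w z
  have hnon : (G.neighborSet w).Nonempty := by
    cases p with
    | nil => exact absurd rfl hz.symm
    | cons h q => exact ⟨_, h⟩
  obtain ⟨a, ha⟩ := hnon
  have hcard : (G.neighborSet w).ncard = 1 :=
    Set.ncard_eq_one.mpr ⟨a, Set.eq_singleton_iff_unique_mem.mpr
      ⟨ha, fun b hb => hsub hb ha⟩⟩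
  exact ⟨w, hleaf w hcard, hwS⟩

end Aux

/-- In a finite tree rooted at `r` in which every leaf belongs to `M` (with `|M| ≥ 2`), let `v`
be a deepest vertex whose descendant subtree contains at least two vertices of `M` (descendants
of `x` are the vertices `u` with `x` on the unique path from `r` to `u`).  Then in the subtree
rooted at `v`, every vertex other than `v` has at most one child; i.e. the subtree rooted at `v`
is a spider with center `v`. -/
theorem deepest_branching_is_spider {V : Type*} [Fintype V]
    (G : SimpleGraph V) (hG : G.IsTree)
    (r : V) (M : Set V) (hM : 2 ≤ M.ncard)
    (hleaf : ∀ u : V, (G.neighborSet u).ncard = 1 → u ∈ M)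
    (v : V)
    (hv : 2 ≤ (M ∩ {u : V | ∀ p : G.Walk r u, p.IsPath → v ∈ p.support}).ncard)
    (hmax : ∀ x : V,
      2 ≤ (M ∩ {u : V | ∀ p : G.Walk r u, p.IsPath → x ∈ p.support}).ncard →
      G.dist r x ≤ G.dist r v) :
    ∀ u : V, (∀ p : G.Walk r u, p.IsPath → v ∈ p.support) → u ≠ v →
      Set.Subsingleton
        {x : V | G.Adj u x ∧ ∀ p : G.Walk r x, p.IsPath → u ∈ p.support} := by
  intro u hu hune x₁ hx₁ x₂ hx₂
  obtain ⟨hadj₁, hD₁⟩ := hx₁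
  obtain ⟨hadj₂, hD₂⟩ := hx₂
  by_contra hne12
  -- pick vertices of `M` in the subtrees of the two children
  obtain ⟨m₁, hm₁M, hm₁⟩ := subtree_meets_M (r := r) hG M hM hleaf x₁
  obtain ⟨m₂, hm₂M, hm₂⟩ := subtree_meets_M (r := r) hG M hM hleaf x₂
  -- the two children are at the same depth
  have hd₁ : G.dist r x₁ = G.dist r u + 1 := tree_child_dist hG hadj₁ hD₁
  have hd₂ : G.dist r x₂ = G.dist r u + 1 := tree_child_dist hG hadj₂ hD₂
  -- hence the two `M`-vertices are distinct
  have hmne : m₁ ≠ m₂ := by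
    intro h
    subst h
    exact hne12 (tree_same_level hG hm₁ hm₂ (by omega))
  -- both lie in the subtree of `u`
  have hm₁u : ∀ p : G.Walk r m₁, p.IsPath → u ∈ p.support := tree_des_trans hm₁ hD₁
  have hm₂u : ∀ p : G.Walk r m₂, p.IsPath → u ∈ p.support := tree_des_trans hm₂ hD₂
  have h2 : 2 ≤ (M ∩ {y : V | ∀ p : G.Walk r y, p.IsPath → u ∈ p.support}).ncard :=
    (Set.one_lt_ncard_iff (Set.toFinite _)).mpr
      ⟨m₁, m₂, ⟨hm₁M, hm₁u⟩, ⟨hm₂M, hm₂u⟩, hmne⟩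
  have hle := hmax u h2
  have hadd : G.dist r u = G.dist r v + G.dist v u := tree_dist_add hG hu
  have hpos : 0 < G.dist v u := hG.isConnected.pos_dist_of_ne (Ne.symm hune)
  omega
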